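/- Rational kernel identity: For any x, x' ∈ ℝ^d with ‖x‖ ≤ 1 and ‖x'‖ ≤ 1, the family (φ(x)_α · φ(x')_α) indexed by multi-indices α ∈ ℕ^d is summable, φ(x) and φ(x') belong to ℓ², and ⟨φ(x), φ(x')⟩_{ℓ²} = 1/(1 − (1/2)⟨x, x'⟩). In particular, ‖φ(x)‖²_{ℓ²} = 1/(1 − (1/2)‖x‖²) ≤ 2. -/

import Mathlib

open scoped RealInnerProductSpace
open Finset

/-- The feature map associated with the rational kernel: the coordinate of `φ(x)` at the
multi-index `α` is `x^α · sqrt(2^{-|α|} · |α|!/(α₁!⋯α_d!))`. -/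
noncomputable def phiMap (d : ℕ) (x : EuclideanSpace ℝ (Fin d)) (α : Fin d →₀ ℕ) : ℝ :=
  (∏ i, x i ^ α i) *
    Real.sqrt (((2 : ℝ) ^ (∑ i, α i))⁻¹ * (Nat.multinomial Finset.univ α : ℝ))

private lemma fiber_tsum_eq (d n : ℕ) (g : (Fin d → ℕ) → ℝ) :
    ∑' a : {a : Fin d → ℕ // ∑ i, a i = n}, g a = ∑ a ∈ Finset.univ.piAntidiag n, g a := by
  rw [← Finset.tsum_subtype']
  exact ((Equiv.subtypeEquivRight (p := fun a : Fin d → ℕ => ∑ i, a i = n)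
    (q := fun a => a ∈ Finset.univ.piAntidiag n)
    (fun a => by simp [Finset.mem_piAntidiag])).tsum_eq
      (fun b : {a : Fin d → ℕ // a ∈ Finset.univ.piAntidiag n} => g ↑b))

private lemma fiber_finite (d n : ℕ) : Finite {a : Fin d → ℕ // ∑ i, a i = n} := by
  haveI : Fintype {a : Fin d → ℕ // a ∈ Finset.univ.piAntidiag n} := FinsetCoe.fintype _
  exact Finite.of_equiv {a : Fin d → ℕ // a ∈ Finset.univ.piAntidiag n}
    (Equiv.subtypeEquivRight (fun a => by simp [Finset.mem_piAntidiag]))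

private lemma summable_finsupp_of {d : ℕ} (F : (Fin d → ℕ) → ℝ) (hs : Summable F) :
    Summable (fun α : Fin d →₀ ℕ => F ⇑α) := by
  have hsF : Summable (F ∘ Finsupp.equivFunOnFinite) :=
    (Finsupp.equivFunOnFinite.summable_iff).2 hs
  exact hsF.congr (fun α => congrArg F rfl)

private lemma tsum_finsupp_eq {d : ℕ} (F : (Fin d → ℕ) → ℝ) :
    ∑' α : Fin d →₀ ℕ, F ⇑α = ∑' a, F a := by
  rw [tsum_congr (fun α : Fin d →₀ ℕ => (congrArg F rfl :
    F ⇑α = F (Finsupp.equivFunOnFinite α)))]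
  exact Finsupp.equivFunOnFinite.tsum_eq F

private lemma key_lemma (d : ℕ) (y : Fin d → ℝ) (h : ∑ i, |y i| < 1) :
    Summable (fun a : Fin d → ℕ => (Nat.multinomial Finset.univ a : ℝ) * ∏ i, y i ^ a i) ∧
    ∑' a : Fin d → ℕ, (Nat.multinomial Finset.univ a : ℝ) * ∏ i, y i ^ a i
      = (1 - ∑ i, y i)⁻¹ := by
  set F : (Fin d → ℕ) → ℝ :=
    fun a => (Nat.multinomial Finset.univ a : ℝ) * ∏ i, y i ^ a i with hF
  have habsF : ∀ a, |F a| = (Nat.multinomial Finset.univ a : ℝ) * ∏ i, |y i| ^ a i := by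
    intro a
    rw [hF, abs_mul, Nat.abs_cast, Finset.abs_prod]
    simp [abs_pow]
  have hr0 : 0 ≤ ∑ i, |y i| := Finset.sum_nonneg fun i _ => abs_nonneg _
  set e := Equiv.sigmaFiberEquiv (fun a : Fin d → ℕ => ∑ i, a i) with he
  haveI : ∀ n, Finite {a : Fin d → ℕ // ∑ i, a i = n} := fiber_finite d
  have hfib_abs : ∀ n, ∑' c : {a : Fin d → ℕ // ∑ i, a i = n}, |F ↑c| = (∑ i, |y i|) ^ n := by
    intro n
    rw [fiber_tsum_eq d n (fun a => |F a|), Finset.sum_pow_eq_sum_piAntidiag Finset.univ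
      (fun i => |y i|) n]
    exact Finset.sum_congr rfl fun a _ => habsF a
  have hfib : ∀ n, ∑' c : {a : Fin d → ℕ // ∑ i, a i = n}, F ↑c = (∑ i, y i) ^ n := by
    intro n
    rw [fiber_tsum_eq d n F, Finset.sum_pow_eq_sum_piAntidiag Finset.univ y n]
  have habs : Summable fun p : Σ n, {a : Fin d → ℕ // ∑ i, a i = n} => |F (e p)| := by
    rw [summable_sigma_of_nonneg (fun p => abs_nonneg _)]
    constructor
    · intro n; exact Summable.of_finite
    · apply Summable.congr (summable_geometric_of_lt_one hr0 h)
      intro n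
      exact (hfib_abs n).symm
  have hsum_sigma : Summable fun p : Σ n, {a : Fin d → ℕ // ∑ i, a i = n} => F (e p) :=
    habs.of_abs
  have hsumF : Summable F := e.summable_iff.mp hsum_sigma
  refine ⟨hsumF, ?_⟩
  have h1 : ∑' a, F a = ∑' p : Σ n, {a : Fin d → ℕ // ∑ i, a i = n}, F (e p) :=
    (e.tsum_eq F).symm
  rw [h1, Summable.tsum_sigma hsum_sigma]
  have h2 : ∀ n : ℕ, ∑' c : {a : Fin d → ℕ // ∑ i, a i = n}, F (e ⟨n, c⟩) = (∑ i, y i) ^ n :=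
    fun n => hfib n
  rw [tsum_congr h2]
  apply tsum_geometric_of_norm_lt_one
  rw [Real.norm_eq_abs]
  exact lt_of_le_of_lt (Finset.abs_sum_le_sum_abs _ _) h

private lemma phi_mul (d : ℕ) (x x' : EuclideanSpace ℝ (Fin d)) (α : Fin d →₀ ℕ) :
    phiMap d x α * phiMap d x' α =
      (Nat.multinomial Finset.univ α : ℝ) * ∏ i, (x i * x' i / 2) ^ α i := by
  unfold phiMap
  have h0 : (0:ℝ) ≤ ((2 : ℝ) ^ (∑ i, α i))⁻¹ * (Nat.multinomial Finset.univ α : ℝ) := by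
    positivity
  have hprod : (∏ i, (x i * x' i / 2) ^ α i)
      = (∏ i, x i ^ α i) * (∏ i, x' i ^ α i) * ((2:ℝ) ^ (∑ i, α i))⁻¹ := by
    have h : ∀ i : Fin d, (x i * x' i / 2) ^ α i
        = x i ^ α i * x' i ^ α i * ((2:ℝ)⁻¹) ^ α i := by
      intro i; rw [div_eq_mul_inv, mul_pow, mul_pow]
    rw [Finset.prod_congr rfl (fun i _ => h i), Finset.prod_mul_distrib,
      Finset.prod_mul_distrib, Finset.prod_pow_eq_pow_sum, inv_pow]
  rw [hprod, mul_mul_mul_comm, Real.mul_self_sqrt h0]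
  ring

/-- Rational kernel identity: for `‖x‖ ≤ 1` and `‖x'‖ ≤ 1`, the family
`(φ(x)_α · φ(x')_α)` is summable, `φ(x), φ(x') ∈ ℓ²`, and
`⟪φ(x), φ(x')⟫ = 1/(1 − ⟪x,x'⟫/2)`; in particular
`‖φ(x)‖² = 1/(1 − ‖x‖²/2) ≤ 2`. -/
theorem rational_kernel_identity (d : ℕ) (x x' : EuclideanSpace ℝ (Fin d))
    (hx : ‖x‖ ≤ 1) (hx' : ‖x'‖ ≤ 1) :
    ∃ (h1 : Memℓp (phiMap d x) 2) (h2 : Memℓp (phiMap d x') 2),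
      Summable (fun α : Fin d →₀ ℕ => phiMap d x α * phiMap d x' α) ∧
      ⟪(⟨phiMap d x, h1⟩ : lp (fun _ : Fin d →₀ ℕ => ℝ) 2),
        (⟨phiMap d x', h2⟩ : lp (fun _ : Fin d →₀ ℕ => ℝ) 2)⟫ =
        1 / (1 - ⟪x, x'⟫ / 2) ∧
      ‖(⟨phiMap d x, h1⟩ : lp (fun _ : Fin d →₀ ℕ => ℝ) 2)‖ ^ 2 =
        1 / (1 - ‖x‖ ^ 2 / 2) ∧
      ‖(⟨phiMap d x, h1⟩ : lp (fun _ : Fin d →₀ ℕ => ℝ) 2)‖ ^ 2 ≤ 2 := by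
  have hinner : ∀ u v : EuclideanSpace ℝ (Fin d), ⟪u, v⟫ = ∑ i, u i * v i := by
    intro u v; simp [PiLp.inner_apply, RCLike.inner_apply, conj_trivial]; exact Finset.sum_congr rfl fun i _ => mul_comm _ _
  have hnormsq : ∀ u : EuclideanSpace ℝ (Fin d), ‖u‖ ^ 2 = ∑ i, u i * u i := by
    intro u; rw [← real_inner_self_eq_norm_sq, hinner]
  have main : ∀ u v : EuclideanSpace ℝ (Fin d), ‖u‖ ≤ 1 → ‖v‖ ≤ 1 →
      Summable (fun α : Fin d →₀ ℕ => phiMap d u α * phiMap d v α) ∧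
      ∑' α : Fin d →₀ ℕ, phiMap d u α * phiMap d v α = (1 - ⟪u, v⟫ / 2)⁻¹ := by
    intro u v hu hv
    have habs : ∑ i, |u i * v i / 2| < 1 := by
      have hCS : (∑ i, |u i| * |v i|) ^ 2 ≤ (∑ i, |u i| ^ 2) * ∑ i, |v i| ^ 2 :=
        Finset.sum_mul_sq_le_sq_mul_sq Finset.univ _ _
      have h1 : ∑ i, |u i| ^ 2 = ‖u‖ ^ 2 := by
        rw [hnormsq]; exact Finset.sum_congr rfl fun i _ => by rw [sq_abs]; ring
      have h2 : ∑ i, |v i| ^ 2 = ‖v‖ ^ 2 := by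
        rw [hnormsq]; exact Finset.sum_congr rfl fun i _ => by rw [sq_abs]; ring
      have hnn : 0 ≤ ∑ i, |u i| * |v i| :=
        Finset.sum_nonneg fun i _ => mul_nonneg (abs_nonneg _) (abs_nonneg _)
      rw [h1, h2] at hCS
      have hu2 : ‖u‖ ^ 2 ≤ 1 := by nlinarith [norm_nonneg u]
      have hv2 : ‖v‖ ^ 2 ≤ 1 := by nlinarith [norm_nonneg v]
      have hb : ∑ i, |u i| * |v i| ≤ 1 := by nlinarith [sq_nonneg ‖u‖, sq_nonneg ‖v‖]
      have hy : ∀ i : Fin d, |u i * v i / 2| = |u i| * |v i| / 2 := by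
        intro i; rw [abs_div, abs_mul]; norm_num
      rw [Finset.sum_congr rfl fun i _ => hy i, ← Finset.sum_div]
      linarith
    obtain ⟨hs, ht⟩ := key_lemma d (fun i => u i * v i / 2) habs
    have hterm : ∀ α : Fin d →₀ ℕ, phiMap d u α * phiMap d v α
        = (Nat.multinomial Finset.univ α : ℝ) * ∏ i, (u i * v i / 2) ^ α i :=
      fun α => phi_mul d u v α
    have hsum : Summable (fun α : Fin d →₀ ℕ => phiMap d u α * phiMap d v α) := by
      refine Summable.congr ?_ fun α => (hterm α).symm
      exact summable_finsupp_of
        (fun a : Fin d → ℕ => (Nat.multinomial Finset.univ a : ℝ) * ∏ i, (u i * v i / 2) ^ a i)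
        hs
    have hsumy : ∑ i, (u i * v i / 2) = ⟪u, v⟫ / 2 := by
      rw [hinner, Finset.sum_div]
    refine ⟨hsum, ?_⟩
    rw [tsum_congr hterm, tsum_finsupp_eq
      (fun a : Fin d → ℕ => (Nat.multinomial Finset.univ a : ℝ) * ∏ i, (u i * v i / 2) ^ a i),
      ht, hsumy]
  have hmem : ∀ u : EuclideanSpace ℝ (Fin d), ‖u‖ ≤ 1 → Memℓp (phiMap d u) 2 := by
    intro u hu
    apply memℓp_gen
    refine Summable.congr (main u u hu hu).1 fun α => ?_
    have h2 : ((2 : ENNReal)).toReal = (2 : ℝ) := by norm_num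
    rw [h2, Real.rpow_two, Real.norm_eq_abs, sq_abs, sq]
  have h1 := hmem x hx
  have h2 := hmem x' hx'
  have hinnerlp : ∀ (v : EuclideanSpace ℝ (Fin d)) (hv1 : ‖v‖ ≤ 1)
      (hm : Memℓp (phiMap d v) 2),
      ⟪(⟨phiMap d x, h1⟩ : lp (fun _ : Fin d →₀ ℕ => ℝ) 2),
        (⟨phiMap d v, hm⟩ : lp (fun _ : Fin d →₀ ℕ => ℝ) 2)⟫ = 1 / (1 - ⟪x, v⟫ / 2) := by
    intro v hv1 hm
    rw [lp.inner_eq_tsum]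
    simp only [RCLike.inner_apply, conj_trivial]
    rw [one_div, tsum_congr fun α => mul_comm (phiMap d v α) (phiMap d x α)]
    exact (main x v hx hv1).2
  have hnormx : ‖(⟨phiMap d x, h1⟩ : lp (fun _ : Fin d →₀ ℕ => ℝ) 2)‖ ^ 2
      = 1 / (1 - ‖x‖ ^ 2 / 2) := by
    rw [← real_inner_self_eq_norm_sq, hinnerlp x hx h1, real_inner_self_eq_norm_sq]
  refine ⟨h1, h2, (main x x' hx hx').1, hinnerlp x' hx' h2, hnormx, ?_⟩
  rw [hnormx]
  have hx2 : ‖x‖ ^ 2 ≤ 1 := by nlinarith [norm_nonneg x]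
  have h0 : (0:ℝ) < 1 - ‖x‖ ^ 2 / 2 := by nlinarith
  rw [div_le_iff₀ h0]
  linarith
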